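/- Let p > 1 and a_p ≤ ω < ω_p, where ω_p = p/(p+1)² and a_p = p(7p−5)/(4(p+1)(2p−1)²). Then k(u) := f'(u)·(u−β) − f(u) < 0 for all u in the open interval (β, c), where f'(u) = −ω + p·u^{p−1} − (2p−1)·u^{2(p−1)}, β = ((p/(p+1))·(1−√(1−(p+1)²ω/p)))^{1/(p−1)}, and c = ((1+√(1−4ω))/2)^{1/(p−1)}. -/

import Mathlib

open Real Set Filter Topology

set_option maxHeartbeats 2000000 in
/-- For `p > 1` and `a_p ≤ ω < ω_p`: `k(u) = f'(u)(u - β) - f(u) < 0` for all `u ∈ (β, c)`,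
where `f'(u) = -ω + p u^(p-1) - (2p-1) u^(2(p-1))`. -/
theorem k_neg (p ω : ℝ) (hp : 1 < p)
    (hω₁ : p * (7 * p - 5) / (4 * (p + 1) * (2 * p - 1) ^ 2) ≤ ω)
    (hω₂ : ω < p / (p + 1) ^ 2)
    (f f' : ℝ → ℝ)
    (hf : ∀ u > (0 : ℝ), f u = -ω * u + u ^ p - u ^ (2 * p - 1))
    (hf' : ∀ u > (0 : ℝ), f' u = -ω + p * u ^ (p - 1) - (2 * p - 1) * u ^ (2 * (p - 1)))
    (β c : ℝ)
    (hβ : β = (p / (p + 1) * (1 - Real.sqrt (1 - (p + 1) ^ 2 * ω / p))) ^ (1 / (p - 1)))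
    (hc : c = ((1 + Real.sqrt (1 - 4 * ω)) / 2) ^ (1 / (p - 1))) :
    ∀ u ∈ Set.Ioo β c, f' u * (u - β) - f u < 0 := by
  have hp0 : (0:ℝ) < p := by linarith
  have hp1 : (0:ℝ) < p - 1 := by linarith
  have hp1' : (0:ℝ) < p + 1 := by linarith
  have h2p1 : (0:ℝ) < 2 * p - 1 := by linarith
  have hω0 : 0 < ω := by
    have : 0 < p * (7 * p - 5) / (4 * (p + 1) * (2 * p - 1) ^ 2) := by
      apply div_pos <;> nlinarith
    linarith
  obtain ⟨D, hDdef⟩ : ∃ D : ℝ, D = 1 - (p + 1) ^ 2 * ω / p := ⟨_, rfl⟩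
  rw [← hDdef] at hβ
  have hωp : ω * (p + 1) ^ 2 < p := by
    have := (lt_div_iff₀ (by positivity : (0:ℝ) < (p + 1) ^ 2)).mp hω₂
    linarith
  have hD0 : 0 < D := by
    rw [hDdef]
    have : (p + 1) ^ 2 * ω / p < 1 := by
      rw [div_lt_one hp0]; nlinarith
    linarith
  have hD1 : D < 1 := by
    rw [hDdef]
    have : 0 < (p + 1) ^ 2 * ω / p := by positivity
    linarith
  have hsqD2 : Real.sqrt D ^ 2 = D := Real.sq_sqrt hD0.le
  have hsqD0 : 0 < Real.sqrt D := Real.sqrt_pos.mpr hD0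
  have hsqD1 : Real.sqrt D < 1 := by
    have h := Real.sqrt_lt_sqrt hD0.le hD1
    rwa [Real.sqrt_one] at h
  obtain ⟨s, hsdef⟩ : ∃ s : ℝ, s = p / (p + 1) * (1 - Real.sqrt D) := ⟨_, rfl⟩
  rw [← hsdef] at hβ
  have hs0 : 0 < s := by
    rw [hsdef]
    apply mul_pos (by positivity)
    linarith
  have hps : (p + 1) * s = p * (1 - Real.sqrt D) := by
    rw [hsdef]; field_simp
  have hx2 : Real.sqrt D ^ 2 = 1 - (p + 1) ^ 2 * ω / p := by rw [hsqD2, hDdef]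
  have hx2' : p * Real.sqrt D ^ 2 = p - (p + 1) ^ 2 * ω := by
    rw [hx2]; field_simp
  -- quadratic identity for s
  have h4 : (p + 1) * s - p = -(p * Real.sqrt D) := by linear_combination hps
  have h3 : ((p + 1) * s - p) ^ 2 = p ^ 2 * (Real.sqrt D) ^ 2 := by rw [h4]; ring
  have hquad : (p + 1) ^ 2 * s ^ 2 - 2 * p * (p + 1) * s + p * (p + 1) ^ 2 * ω = 0 := by
    linear_combination h3 + p * hx2'
  -- s < (p+1) ω
  have hDs : D < Real.sqrt D := by
    nlinarith [hsqD2, hsqD0, hsqD1]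
  have hD' : (p + 1) ^ 2 * ω = p * (1 - D) := by
    rw [hDdef]; field_simp; ring
  have hsω : s < (p + 1) * ω := by
    nlinarith [hps, hD', mul_pos hp0 (sub_pos.mpr hDs), hp1']
  -- s ≥ p / (2(2p-1))  (equivalent to ω ≥ a_p)
  have hst : p ≤ s * (2 * (2 * p - 1)) := by
    have ha : p * (7 * p - 5) ≤ ω * (4 * (p + 1) * (2 * p - 1) ^ 2) := by
      have := (div_le_iff₀ (by positivity : (0:ℝ) < 4 * (p + 1) * (2 * p - 1) ^ 2)).mp hω₁
      linarith
    have key : (p + 1) * (7 * p - 5) / (4 * (2 * p - 1) ^ 2) ≤ (p + 1) ^ 2 * ω / p := by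
      rw [div_le_div_iff₀ (by positivity) hp0]
      nlinarith [ha]
    have heq : (1:ℝ) - (p + 1) * (7 * p - 5) / (4 * (2 * p - 1) ^ 2)
        = (3 * (p - 1) / (2 * (2 * p - 1))) ^ 2 := by
      have hb : (2 * (2 * p - 1)) ^ 2 ≠ 0 := pow_ne_zero _ (mul_ne_zero two_ne_zero h2p1.ne')
      have hd : 4 * (2 * p - 1) ^ 2 ≠ 0 := mul_ne_zero four_ne_zero (pow_ne_zero _ h2p1.ne')
      rw [div_pow, sub_eq_iff_eq_add, div_add_div _ _ hb hd, eq_div_iff (mul_ne_zero hb hd)]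
      ring
    have h1 : D ≤ (3 * (p - 1) / (2 * (2 * p - 1))) ^ 2 := by
      rw [hDdef, ← heq]; linarith
    have h2 : Real.sqrt D ≤ 3 * (p - 1) / (2 * (2 * p - 1)) := by
      have := Real.sqrt_le_sqrt h1
      rwa [Real.sqrt_sq (by positivity)] at this
    have h2' : Real.sqrt D * (2 * (2 * p - 1)) ≤ 3 * (p - 1) := by
      rw [le_div_iff₀ (by positivity)] at h2
      linarith
    nlinarith [mul_le_mul_of_nonneg_left h2' hp0.le, hps, hp1', hp0]
  -- β basics
  have hβ0 : 0 < β := by rw [hβ]; exact Real.rpow_pos_of_pos hs0 _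
  have hβs : β ^ (p - 1) = s := by
    rw [hβ, ← Real.rpow_mul hs0.le, one_div, inv_mul_cancel₀ hp1.ne', Real.rpow_one]
  -- the function K and its derivative
  have hderiv : ∀ v ∈ Set.Ici β,
      HasDerivAt (fun v : ℝ => (-ω + p * v ^ (p-1) - (2*p-1) * v ^ (2*(p-1))) * (v - β)
        - (-ω * v + v ^ p - v ^ (2*p-1)))
      ((p*(p-1)*v^(p-2) - 2*(p-1)*(2*p-1)*v^(2*(p-1)-1)) * (v - β)) v := by
    intro v hv
    have hv0 : 0 < v := lt_of_lt_of_le hβ0 hv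
    have d1 : HasDerivAt (fun x : ℝ => x ^ (p-1)) ((p-1) * v ^ (p-1-1)) v :=
      Real.hasDerivAt_rpow_const (Or.inl hv0.ne')
    have d2 : HasDerivAt (fun x : ℝ => x ^ (2*(p-1))) ((2*(p-1)) * v ^ (2*(p-1)-1)) v :=
      Real.hasDerivAt_rpow_const (Or.inl hv0.ne')
    have d3 : HasDerivAt (fun x : ℝ => x ^ p) (p * v ^ (p-1)) v :=
      Real.hasDerivAt_rpow_const (Or.inl hv0.ne')
    have d4 : HasDerivAt (fun x : ℝ => x ^ (2*p-1)) ((2*p-1) * v ^ (2*p-1-1)) v :=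
      Real.hasDerivAt_rpow_const (Or.inl hv0.ne')
    have dG : HasDerivAt (fun x : ℝ => -ω + p * x ^ (p-1) - (2*p-1) * x ^ (2*(p-1)))
        (p * ((p-1) * v ^ (p-1-1)) - (2*p-1) * ((2*(p-1)) * v ^ (2*(p-1)-1))) v :=
      ((d1.const_mul p).const_add (-ω)).sub (d2.const_mul (2*p-1))
    have dId : HasDerivAt (fun x : ℝ => x - β) 1 v := (hasDerivAt_id v).sub_const β
    have dF : HasDerivAt (fun x : ℝ => -ω * x + x ^ p - x ^ (2*p-1))
        (-ω * 1 + p * v ^ (p-1) - (2*p-1) * v ^ (2*p-1-1)) v :=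
      (((hasDerivAt_id v).const_mul (-ω)).add d3).sub d4
    have h := (dG.mul dId).sub dF
    refine h.congr_deriv ?_
    rw [show (2*p-1-1:ℝ) = 2*(p-1) by ring, show (p-1-1:ℝ) = p-2 by ring]
    ring
  -- K is strictly decreasing on [β, ∞)
  have hanti : StrictAntiOn (fun v : ℝ =>
      (-ω + p * v ^ (p-1) - (2*p-1) * v ^ (2*(p-1))) * (v - β)
        - (-ω * v + v ^ p - v ^ (2*p-1))) (Set.Ici β) := by
    apply strictAntiOn_of_deriv_neg (convex_Ici β)
    · intro v hv
      exact (hderiv v hv).differentiableAt.continuousAt.continuousWithinAt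
    · intro v hv
      rw [interior_Ici, Set.mem_Ioi] at hv
      rw [(hderiv v (Set.mem_Ici.mpr (le_of_lt hv))).deriv]
      have hv0 : 0 < v := lt_trans hβ0 hv
      have hX : s < v ^ (p-1) := by
        rw [← hβs]; exact Real.rpow_lt_rpow hβ0.le hv hp1
      have hsplit : v ^ (2*(p-1)-1) = v ^ (p-2) * v ^ (p-1) := by
        rw [← Real.rpow_add hv0]; congr 1; ring
      have hvp2 : 0 < v ^ (p-2) := Real.rpow_pos_of_pos hv0 _
      have hβv : 0 < v - β := sub_pos.mpr hv
      have hts : p < 2 * (2*p-1) * v ^ (p-1) := by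
        have := mul_lt_mul_of_pos_right hX (by positivity : (0:ℝ) < 2 * (2*p-1))
        nlinarith [hst]
      have h5 : p - 2*(2*p-1)*v^(p-1) < 0 := by linarith
      have h6 : (p-1) * v^(p-2) * (p - 2*(2*p-1)*v^(p-1)) < 0 :=
        mul_neg_of_pos_of_neg (mul_pos hp1 hvp2) h5
      have hneg : p*(p-1)*v^(p-2) - 2*(p-1)*(2*p-1)*v^(2*(p-1)-1) < 0 := by
        rw [hsplit]
        nlinarith [h6]
      exact mul_neg_of_neg_of_pos hneg hβv
  -- value at β
  have e1 : β ^ p = β * s := by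
    have h : β ^ p = β ^ (1 + (p-1)) := by congr 1; ring
    rw [h, Real.rpow_add hβ0, Real.rpow_one, hβs]
  have e2 : β ^ (2*p-1) = β * (s * s) := by
    have h : β ^ (2*p-1) = β ^ (1 + ((p-1) + (p-1))) := by congr 1; ring
    rw [h, Real.rpow_add hβ0, Real.rpow_add hβ0, Real.rpow_one, hβs]
  have hs2 : s ^ 2 - s + ω < 0 := by
    have key : 0 < (p-1)*(p+1)*((p+1)*ω - s) :=
      mul_pos (mul_pos hp1 hp1') (sub_pos.mpr hsω)
    have hsq : (0:ℝ) < (p+1)^2 := by positivity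
    nlinarith [hquad, key, hsq]
  have hKβ : (-ω + p * β ^ (p-1) - (2*p-1) * β ^ (2*(p-1))) * (β - β)
      - (-ω * β + β ^ p - β ^ (2*p-1)) < 0 := by
    rw [e1, e2, sub_self β, mul_zero, zero_sub]
    have hb : 0 < β * (s - s * s - ω) := by
      apply mul_pos hβ0
      linarith [hs2, (by ring : s * s = s ^ 2)]
    linarith [hb, (by ring : -(-ω * β + β * s - β * (s * s)) = -(β * (s - s * s - ω)))]

  -- conclusion
  intro u hu
  have hu1 : β < u := hu.1
  have hu0 : 0 < u := lt_trans hβ0 hu1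
  rw [hf u hu0, hf' u hu0]
  have h := hanti (self_mem_Ici) (Set.mem_Ici.mpr (le_of_lt hu1)) hu1
  exact lt_trans h hKβ
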